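/- Probabilistic existence of small c-ideal families (key step in the proof of Lemma 3.4): set p := M_c / C(u,n), where C(u,n) is the binomial coefficient 'u choose n', and assume 0 < p < 1. Then for every natural number N with N > ln(C(u,n)) / (−ln(1−p)) there exists a c-ideal family of hash functions of cardinality at most N. -/

import Mathlib

set_option maxHeartbeats 1000000

open Finset

open Finset

/-- The maximum cell load of hash function `h` on key set `S`. -/
def cost {u m : ℕ} (h : Fin u → Fin m) (S : Finset (Fin u)) : ℕ :=
  Finset.univ.sup fun k : Fin m => (S.filter fun x => h x = k).card

/-- The collection of all `n`-element subsets of the universe `Fin u`. -/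
def Sn (u n : ℕ) : Finset (Finset (Fin u)) :=
  Finset.univ.powersetCard n

/-- The maximal number of `n`-element sets any single hash function maps `c`-ideally
(i.e., with maximum cell load at most `d`). -/
def Mc (u m n d : ℕ) : ℕ :=
  Finset.univ.sup fun h : Fin u → Fin m =>
    ((Sn u n).filter fun S => cost h S ≤ d).card

/-- A family `H` of hash functions is `c`-ideal if every `n`-element set of keys is
hashed with maximum cell load at most `d` by some member of `H`. -/
def IsIdealFamily (u m n d : ℕ) (H : Finset (Fin u → Fin m)) : Prop :=
  ∀ S ∈ Sn u n, ∃ h ∈ H, cost h S ≤ d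


section Aux
variable {u : ℕ}

def cnt (S T : Finset (Fin u)) : ℕ :=
  (univ.filter fun π : Equiv.Perm (Fin u) => S.image π = T).card

lemma exists_perm_image (S T : Finset (Fin u)) (h : S.card = T.card) :
    ∃ σ : Equiv.Perm (Fin u), S.image σ = T := by
  classical
  have e : {x // x ∈ S} ≃ {x // x ∈ T} := by
    apply Fintype.equivOfCardEq
    simpa [Fintype.card_coe] using h
  have e' : {x : Fin u // ¬ x ∈ S} ≃ {x : Fin u // ¬ x ∈ T} := by
    apply Fintype.equivOfCardEq
    rw [Fintype.card_subtype_compl, Fintype.card_subtype_compl]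
    simp [Fintype.card_coe, h]
  refine ⟨(Equiv.sumCompl (· ∈ S)).symm.trans ((e.sumCongr e').trans (Equiv.sumCompl (· ∈ T))), ?_⟩
  apply Finset.eq_of_subset_of_card_le
  · intro y hy
    obtain ⟨x, hx, rfl⟩ := Finset.mem_image.mp hy
    simp [Equiv.sumCompl_symm_apply_of_pos hx]
  · rw [Finset.card_image_of_injective _ (Equiv.injective _), h]

lemma cnt_const {n : ℕ} {S T S' T' : Finset (Fin u)} (hS : S.card = n) (hT : T.card = n)
    (hS' : S'.card = n) (hT' : T'.card = n) : cnt S T = cnt S' T' := by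
  obtain ⟨σ, hσ⟩ := exists_perm_image S' S (hS'.trans hS.symm)
  obtain ⟨τ, hτ⟩ := exists_perm_image T T' (hT.trans hT'.symm)
  unfold cnt
  apply Finset.card_bij' (fun π _ => τ * π * σ) (fun π _ => τ⁻¹ * π * σ⁻¹)
  · intro π hπ
    simp only [Finset.mem_filter, Finset.mem_univ, true_and] at hπ ⊢
    have : S'.image (⇑(τ * π * σ)) = ((S'.image σ).image π).image τ := by
      simp [Finset.image_image, Function.comp_def]
    rw [this, hσ, hπ, hτ]
  · intro π hπ
    simp only [Finset.mem_filter, Finset.mem_univ, true_and] at hπ ⊢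
    have h1 : S.image (⇑(τ⁻¹ * π * σ⁻¹)) = ((S.image (⇑(σ⁻¹))).image ⇑π).image (⇑(τ⁻¹)) := by
      simp [Finset.image_image, Function.comp_def]
    have h2 : S.image (⇑(σ⁻¹)) = S' := by
      rw [← hσ, Finset.image_image]; simp [Function.comp_def]
    have h3 : T'.image (⇑(τ⁻¹)) = T := by
      rw [← hτ, Finset.image_image]; simp [Function.comp_def]
    rw [h1, h2, hπ, h3]
  · intro π _; group
  · intro π _; group

lemma sum_cnt {n : ℕ} (S : Finset (Fin u)) (hS : S.card = n) :
    ∑ T ∈ univ.powersetCard n, cnt S T = Fintype.card (Equiv.Perm (Fin u)) := by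
  rw [← Finset.card_univ]
  exact (Finset.card_eq_sum_card_fiberwise (fun π _ => by
    simp [Finset.mem_powersetCard_univ, Finset.card_image_of_injective _ (Equiv.injective π), hS])).symm

lemma cnt_self_pos (S : Finset (Fin u)) : 0 < cnt S S := by
  apply Finset.card_pos.mpr
  exact ⟨1, by simp [cnt, Finset.mem_filter]⟩

lemma cost_comp {m : ℕ} (h : Fin u → Fin m) (π : Equiv.Perm (Fin u)) (S : Finset (Fin u)) :
    cost (fun x => h (π x)) S = cost h (S.image π) := by
  unfold cost
  congr 1
  funext k
  rw [Finset.filter_image, Finset.card_image_of_injective _ (Equiv.injective π)]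

lemma avg_step {m n d : ℕ} (h0 : Fin u → Fin m)
    (T : Finset (Finset (Fin u))) (hT : ∀ S ∈ T, S.card = n) (hne : T.Nonempty) :
    ∃ g : Fin u → Fin m,
      T.card * ((univ.powersetCard n).filter fun S => cost h0 S ≤ d).card ≤
        (T.filter fun S => cost g S ≤ d).card * Nat.choose u n := by
  classical
  set G := (univ.powersetCard n).filter fun S => cost h0 S ≤ d with hGdef
  obtain ⟨S₀, hS₀⟩ := hne
  set c0 := cnt S₀ S₀ with hc0def
  have hc0 : 0 < c0 := cnt_self_pos S₀
  have hScard : ∀ S ∈ T, S.card = n := hT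
  -- Claim A
  have claimA : ∀ S ∈ T,
      (univ.filter fun π : Equiv.Perm (Fin u) => cost (fun x => h0 (π x)) S ≤ d).card
        = G.card * c0 := by
    intro S hS
    have hSn : S.card = n := hScard S hS
    have hiff : ∀ π : Equiv.Perm (Fin u),
        (cost (fun x => h0 (π x)) S ≤ d) ↔ S.image π ∈ G := by
      intro π
      rw [cost_comp]
      simp [hGdef, Finset.mem_filter, Finset.mem_powersetCard_univ,
        Finset.card_image_of_injective _ (Equiv.injective π), hSn]
    rw [Finset.filter_congr (fun π _ => by rw [hiff π])]
    rw [Finset.card_eq_sum_card_fiberwise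
      (s := univ.filter fun π : Equiv.Perm (Fin u) => S.image π ∈ G)
      (f := fun π : Equiv.Perm (Fin u) => S.image π) (t := G)
      (fun π hπ => (Finset.mem_filter.mp (Finset.mem_coe.mp hπ)).2)]
    simp only [Finset.filter_filter]
    rw [show (G.card * c0) = ∑ _b ∈ G, c0 by rw [Finset.sum_const, smul_eq_mul]]
    apply Finset.sum_congr rfl
    intro B hB
    have hBn : B.card = n := by
      have := (Finset.mem_filter.mp hB).1
      exact Finset.mem_powersetCard_univ.mp this
    rw [Finset.filter_congr (fun (π : Equiv.Perm (Fin u)) (_ : π ∈ univ) =>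
      show (S.image π ∈ G ∧ S.image π = B) ↔ (S.image π = B) from
        ⟨fun h => h.2, fun h => ⟨by rw [h]; exact hB, h⟩⟩)]
    exact cnt_const hSn hBn (hScard S₀ hS₀) (hScard S₀ hS₀)
  -- Claim B
  have claimB : Fintype.card (Equiv.Perm (Fin u)) = Nat.choose u n * c0 := by
    rw [← sum_cnt S₀ (hScard S₀ hS₀)]
    rw [Finset.sum_congr rfl (fun B hB => cnt_const (hScard S₀ hS₀)
      (Finset.mem_powersetCard_univ.mp hB) (hScard S₀ hS₀) (hScard S₀ hS₀))]
    rw [Finset.sum_const, smul_eq_mul, Finset.card_powersetCard, Finset.card_univ,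
      Fintype.card_fin]
  -- total sum
  have total : ∑ π : Equiv.Perm (Fin u),
      (T.filter fun S => cost (fun x => h0 (π x)) S ≤ d).card = T.card * (G.card * c0) := by
    have : ∀ π : Equiv.Perm (Fin u),
        (T.filter fun S => cost (fun x => h0 (π x)) S ≤ d).card
          = ∑ S ∈ T, if cost (fun x => h0 (π x)) S ≤ d then 1 else 0 :=
      fun π => Finset.card_filter _ _
    rw [Finset.sum_congr rfl (fun π _ => this π), Finset.sum_comm]
    have : ∀ S ∈ T, (∑ π : Equiv.Perm (Fin u),
        if cost (fun x => h0 (π x)) S ≤ d then 1 else 0) = G.card * c0 := by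
      intro S hS
      rw [← Finset.card_filter]
      exact claimA S hS
    rw [Finset.sum_congr rfl this, Finset.sum_const, smul_eq_mul]
  -- pigeonhole
  by_contra hcon
  push_neg at hcon
  have hlt : ∀ π : Equiv.Perm (Fin u),
      (T.filter fun S => cost (fun x => h0 (π x)) S ≤ d).card * (Nat.choose u n * c0)
        < T.card * G.card * c0 := by
    intro π
    have := hcon (fun x => h0 (π x))
    calc (T.filter fun S => cost (fun x => h0 (π x)) S ≤ d).card * (Nat.choose u n * c0)
        = ((T.filter fun S => cost (fun x => h0 (π x)) S ≤ d).card * Nat.choose u n) * c0 := by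
          ring
      _ < (T.card * G.card) * c0 := (Nat.mul_lt_mul_right hc0).mpr this
  have hsum := Finset.sum_lt_sum_of_nonempty (s := (univ : Finset (Equiv.Perm (Fin u))))
    Finset.univ_nonempty (fun π _ => hlt π)
  rw [← Finset.sum_mul, total, Finset.sum_const, smul_eq_mul, Finset.card_univ, claimB] at hsum
  nlinarith [hsum]

end Aux

/-- **Probabilistic existence of small `c`-ideal families** (key step in the proof of
Lemma 3.4): with `p := M_c / C(u,n)` and `0 < p < 1`, every natural number
`N > ln C(u,n) / (−ln(1−p))` admits a `c`-ideal family of cardinality at most `N`. -/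
theorem probabilistic_existence_small_family (u m n d : ℕ) (hu : 0 < u) (hm : 0 < m)
    (hn : 0 < n) (hmn : m ≤ n) (hnu : n ^ 2 ≤ u) (hdvd : m ∣ n) (hαd : n / m ≤ d)
    (hp0 : 0 < (Mc u m n d : ℝ) / (Nat.choose u n : ℝ))
    (hp1 : (Mc u m n d : ℝ) / (Nat.choose u n : ℝ) < 1)
    (N : ℕ)
    (hN : Real.log (Nat.choose u n : ℝ) /
        (-Real.log (1 - (Mc u m n d : ℝ) / (Nat.choose u n : ℝ))) < (N : ℝ)) :
    ∃ H : Finset (Fin u → Fin m), IsIdealFamily u m n d H ∧ H.card ≤ N := by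
  classical
  set p : ℝ := (Mc u m n d : ℝ) / (Nat.choose u n : ℝ) with hpdef
  have hnu' : n ≤ u := le_trans (Nat.le_self_pow two_ne_zero n) hnu
  have hCpos : 0 < Nat.choose u n := Nat.choose_pos hnu'
  have hCposR : (0 : ℝ) < (Nat.choose u n : ℝ) := by exact_mod_cast hCpos
  -- maximizing hash function
  have huniv : (univ : Finset (Fin u → Fin m)).Nonempty := by
    have : Nonempty (Fin u → Fin m) := ⟨fun _ => ⟨0, hm⟩⟩
    exact Finset.univ_nonempty
  obtain ⟨h0, _, hh0⟩ := Finset.exists_mem_eq_sup univ huniv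
    (fun h : Fin u → Fin m => ((Sn u n).filter fun S => cost h S ≤ d).card)
  have hG : ((Sn u n).filter fun S => cost h0 S ≤ d).card = Mc u m n d := hh0.symm
  have honep : 0 < 1 - p := by linarith
  -- the induction
  have key : ∀ k : ℕ, ∃ H : Finset (Fin u → Fin m), H.card ≤ k ∧
      ((((Sn u n).filter fun S => ∀ h ∈ H, ¬ cost h S ≤ d).card : ℝ)
        ≤ (Nat.choose u n : ℝ) * (1 - p) ^ k) := by
    intro k
    induction k with
    | zero =>
      refine ⟨∅, le_refl _, ?_⟩
      rw [pow_zero, mul_one]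
      have : ((Sn u n).filter fun S => ∀ h ∈ (∅ : Finset (Fin u → Fin m)), ¬ cost h S ≤ d)
          = Sn u n := by
        apply Finset.filter_true_of_mem
        intro S _ h hh
        exact absurd hh (Finset.notMem_empty h)
      rw [this, Sn, Finset.card_powersetCard, Finset.card_univ, Fintype.card_fin]
    | succ k ih =>
      obtain ⟨H, hHcard, hHbound⟩ := ih
      set T := (Sn u n).filter fun S => ∀ h ∈ H, ¬ cost h S ≤ d with hTdef
      by_cases hne : T.Nonempty
      · have hTSn : ∀ S ∈ T, S.card = n := by
          intro S hS
          have := (Finset.mem_filter.mp hS).1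
          rw [Sn] at this
          exact Finset.mem_powersetCard_univ.mp this
        obtain ⟨g, hg⟩ := avg_step (d := d) h0 T hTSn hne
        rw [show ((univ.powersetCard n).filter fun S => cost h0 S ≤ d) =
          ((Sn u n).filter fun S => cost h0 S ≤ d) from rfl, hG] at hg
        refine ⟨insert g H, ?_, ?_⟩
        · exact le_trans (Finset.card_insert_le _ _) (Nat.succ_le_succ hHcard)
        · have hsplit : ((Sn u n).filter fun S => ∀ h ∈ insert g H, ¬ cost h S ≤ d)
              = T.filter fun S => ¬ cost g S ≤ d := by
            ext S
            simp only [hTdef, Finset.mem_filter, Finset.forall_mem_insert]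
            tauto
          rw [hsplit]
          have hfle : (T.filter fun S => cost g S ≤ d).card ≤ T.card :=
            Finset.card_filter_le _ _
          have hcardsplit : (T.filter fun S => ¬ cost g S ≤ d).card
              = T.card - (T.filter fun S => cost g S ≤ d).card := by
            have := Finset.card_filter_add_card_filter_not
              (s := T) (p := fun S => cost g S ≤ d)
            omega
          rw [hcardsplit]
          have hgR : p * (T.card : ℝ) ≤ ((T.filter fun S => cost g S ≤ d).card : ℝ) := by
            rw [hpdef, div_mul_eq_mul_div, div_le_iff₀ hCposR]
            calc (Mc u m n d : ℝ) * (T.card : ℝ)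
                = ((T.card * Mc u m n d : ℕ) : ℝ) := by push_cast; ring
              _ ≤ (((T.filter fun S => cost g S ≤ d).card * Nat.choose u n : ℕ) : ℝ) := by
                  exact_mod_cast hg
              _ = _ := by push_cast; ring
          rw [Nat.cast_sub hfle]
          have hTb : (T.card : ℝ) ≤ (Nat.choose u n : ℝ) * (1 - p) ^ k := hHbound
          calc (T.card : ℝ) - ((T.filter fun S => cost g S ≤ d).card : ℝ)
              ≤ (T.card : ℝ) - p * (T.card : ℝ) := by linarith
            _ = (1 - p) * (T.card : ℝ) := by ring
            _ ≤ (1 - p) * ((Nat.choose u n : ℝ) * (1 - p) ^ k) := by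
                apply mul_le_mul_of_nonneg_left hTb (le_of_lt honep)
            _ = (Nat.choose u n : ℝ) * (1 - p) ^ (k + 1) := by ring
      · refine ⟨H, le_trans hHcard (Nat.le_succ k), ?_⟩
        rw [Finset.not_nonempty_iff_eq_empty] at hne
        rw [← hTdef, hne]
        simp only [Finset.card_empty, Nat.cast_zero]
        positivity
  -- conclude
  obtain ⟨H, hHcard, hHbound⟩ := key N
  refine ⟨H, ?_, hHcard⟩
  have hlog : Real.log ((Nat.choose u n : ℝ) * (1 - p) ^ N) < 0 := by
    rw [Real.log_mul (ne_of_gt hCposR) (by positivity), Real.log_pow]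
    have hlneg : Real.log (1 - p) < 0 := Real.log_neg honep (by linarith)
    have : Real.log (Nat.choose u n : ℝ) < (N : ℝ) * (-Real.log (1 - p)) := by
      rw [div_lt_iff₀ (by linarith : 0 < -Real.log (1 - p))] at hN
      linarith
    push_cast
    linarith
  have hlt1 : (Nat.choose u n : ℝ) * (1 - p) ^ N < 1 := by
    have hpos : (0 : ℝ) < (Nat.choose u n : ℝ) * (1 - p) ^ N := by positivity
    exact (Real.log_neg_iff hpos).mp hlog
  have hzero : ((Sn u n).filter fun S => ∀ h ∈ H, ¬ cost h S ≤ d).card = 0 := by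
    have : ((((Sn u n).filter fun S => ∀ h ∈ H, ¬ cost h S ≤ d).card : ℝ)) < 1 :=
      lt_of_le_of_lt hHbound hlt1
    exact_mod_cast Nat.lt_one_iff.mp (by exact_mod_cast this)
  intro S hS
  by_contra hcon
  push_neg at hcon
  have : S ∈ (Sn u n).filter fun S => ∀ h ∈ H, ¬ cost h S ≤ d :=
    Finset.mem_filter.mpr ⟨hS, fun h hh => not_le.mpr (hcon h hh)⟩
  rw [Finset.card_eq_zero.mp hzero] at this
  exact Finset.notMem_empty S this
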